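/- Let G be a finite group and π a set of primes. Suppose that for every prime p ∉ π and every prime q ∈ π, q does not divide |G/O_{p',p}(G)| (i.e., the Hawkes graph Γ_H(G) has no edge from a vertex outside π to a vertex in π). Then G has a normal Hall π-subgroup, i.e., a normal subgroup H whose order is a π-number and whose index in G is a π'-number. -/
import Mathlib


/-- The join of a set of normal subgroups is normal. -/
theorem sSup_normal {G : Type*} [Group G] (S : Set (Subgroup G)) (hS : ∀ N ∈ S, N.Normal) :
    (sSup S).Normal := by
  constructor
  intro n hn g
  rw [sSup_eq_iSup'] at hn ⊢
  refine Subgroup.iSup_induction (C := fun x => g * x * g⁻¹ ∈ ⨆ N : S, (N : Subgroup G))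
    _ hn ?_ ?_ ?_
  · intro N x hx
    exact Subgroup.mem_iSup_of_mem N ((hS N N.2).conj_mem x hx g)
  · simpa using Subgroup.one_mem _
  · intro x y hx hy
    have h : g * (x * y) * g⁻¹ = (g * x * g⁻¹) * (g * y * g⁻¹) := by group
    rw [h]; exact Subgroup.mul_mem _ hx hy

/-- The `p'`-core `O_{p'}(G)`: the largest normal subgroup of `G` of order coprime to `p`,
realized as the join of all normal subgroups of order coprime to `p`. -/
def pPrimeCore (p : ℕ) (G : Type*) [Group G] : Subgroup G :=
  sSup {N : Subgroup G | N.Normal ∧ Nat.Coprime (Nat.card N) p}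

instance pPrimeCore_normal (p : ℕ) (G : Type*) [Group G] : (pPrimeCore p G).Normal :=
  sSup_normal _ fun _ hN => hN.1

/-- The `p`-core `O_p(G)`: the largest normal `p`-subgroup of `G`,
realized as the join of all normal `p`-subgroups. -/
def pCore (p : ℕ) (G : Type*) [Group G] : Subgroup G :=
  sSup {N : Subgroup G | N.Normal ∧ IsPGroup p N}

instance pCore_normal (p : ℕ) (G : Type*) [Group G] : (pCore p G).Normal :=
  sSup_normal _ fun _ hN => hN.1

/-- `O_{p',p}(G)`: the preimage in `G` of `O_p(G / O_{p'}(G))`. -/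
def OpPrimeP (p : ℕ) (G : Type*) [Group G] : Subgroup G :=
  (pCore p (G ⧸ pPrimeCore p G)).comap (QuotientGroup.mk' (pPrimeCore p G))

/-- A Schmidt group: a non-nilpotent group all of whose proper subgroups are nilpotent. -/
def IsSchmidt (G : Type*) [Group G] : Prop :=
  ¬ Group.IsNilpotent G ∧ ∀ H : Subgroup G, H ≠ ⊤ → Group.IsNilpotent H

/-- A Schmidt `(p,q)`-group: a Schmidt group whose order is divisible by exactly the
primes `p` and `q` and whose Sylow `p`-subgroup is normal. -/
def IsSchmidtPQ (p q : ℕ) (G : Type*) [Group G] : Prop :=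
  IsSchmidt G ∧ (Nat.card G).primeFactors = {p, q} ∧ ∃ P : Sylow p G, (P : Subgroup G).Normal

universe u

lemma sSup_mem_of_supClosed {α : Type*} [CompleteLattice α] {S : Set α} (hfin : S.Finite)
    (hne : S.Nonempty) (hsup : ∀ x ∈ S, ∀ y ∈ S, x ⊔ y ∈ S) : sSup S ∈ S := by
  have hne' : hfin.toFinset.Nonempty := by simpa using hne
  have h1 : sSup S = hfin.toFinset.sup' hne' id := by
    rw [Finset.sup'_eq_sup, Finset.sup_id_eq_sSup, hfin.coe_toFinset]
  rw [h1]
  exact Finset.sup'_mem S hsup _ _ id (fun i hi => hfin.mem_toFinset.mp hi)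

lemma card_sup_dvd {G : Type*} [Group G] [Finite G] (A B : Subgroup G) [A.Normal] :
    Nat.card ↥(A ⊔ B) ∣ Nat.card A * Nat.card B := by
  have h1 : (A.subgroupOf (A ⊔ B)).index * Nat.card (A.subgroupOf (A ⊔ B)) =
      Nat.card ↥(A ⊔ B) := Subgroup.index_mul_card _
  have h2 : Nat.card (A.subgroupOf (A ⊔ B)) = Nat.card A :=
    Nat.card_congr (Subgroup.subgroupOfEquivOfLe le_sup_left).toEquiv
  have h4 : A.relIndex (A ⊔ B) ∣ Nat.card B := by
    rw [sup_comm, Subgroup.relIndex_sup_right]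
    exact Subgroup.index_dvd_card (A.subgroupOf B)
  rw [← h1, h2, mul_comm (Nat.card ↥A) (Nat.card ↥B)]
  exact mul_dvd_mul h4 dvd_rfl

lemma pPrimeCore_mem (p : ℕ) (G : Type*) [Group G] [Finite G] :
    (pPrimeCore p G).Normal ∧ Nat.Coprime (Nat.card (pPrimeCore p G)) p := by
  suffices hmem : pPrimeCore p G ∈ {N : Subgroup G | N.Normal ∧ Nat.Coprime (Nat.card N) p} from hmem
  refine sSup_mem_of_supClosed (Set.toFinite _) ⟨⊥, ?_⟩ ?_
  · exact Set.mem_setOf_eq ▸ ⟨inferInstance, by rw [Subgroup.card_bot]; exact Nat.coprime_one_left p⟩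
  rintro A ⟨hA, hA2⟩ B ⟨hB, hB2⟩
  have := hA; have := hB
  refine ⟨Subgroup.sup_normal A B, Nat.Coprime.coprime_dvd_left (card_sup_dvd A B) ?_⟩
  exact Nat.Coprime.mul hA2 hB2

lemma pCore_isPGroup (p : ℕ) (hp : p.Prime) (G : Type*) [Group G] [Finite G] :
    IsPGroup p (pCore p G) := by
  have : Fact p.Prime := ⟨hp⟩
  suffices h : pCore p G ∈ {N : Subgroup G | N.Normal ∧ IsPGroup p N} from h.2
  refine sSup_mem_of_supClosed (Set.toFinite _) ⟨⊥, ?_⟩ ?_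
  · exact Set.mem_setOf_eq ▸ ⟨inferInstance, IsPGroup.of_bot⟩
  rintro A ⟨hA, hA2⟩ B ⟨hB, hB2⟩
  have := hA; have := hB
  refine ⟨Subgroup.sup_normal A B, ?_⟩
  rw [IsPGroup.iff_card] at hA2 hB2 ⊢
  obtain ⟨a, ha⟩ := hA2; obtain ⟨b, hb⟩ := hB2
  have hd := card_sup_dvd A B
  rw [ha, hb, ← pow_add] at hd
  exact (Nat.dvd_prime_pow hp).mp hd |>.imp fun k hk => hk.2

instance OpPrimeP_normal (p : ℕ) (G : Type*) [Group G] : (OpPrimeP p G).Normal :=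
  (pCore_normal p _).comap _

lemma key_lemma {G : Type*} [Group G] [Finite G] (p : ℕ) (hp : p.Prime) (N : Subgroup G)
    [N.Normal] : (OpPrimeP p G).subgroupOf N ≤ OpPrimeP p ↥N := by
  set P := pPrimeCore p ↥N with hP
  -- Step 1 : (pPrimeCore p G ⊓ N).subgroupOf N ≤ P
  have hT : (pPrimeCore p G ⊓ N).subgroupOf N ≤ P := by
    apply le_sSup
    refine Set.mem_setOf_eq ▸ ⟨?_, ?_⟩
    · exact (Subgroup.normal_inf_normal _ _).subgroupOf N
    · have hcard : Nat.card ((pPrimeCore p G ⊓ N).subgroupOf N) = Nat.card (pPrimeCore p G ⊓ N : Subgroup G) :=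
        Nat.card_congr (Subgroup.subgroupOfEquivOfLe inf_le_right).toEquiv
      rw [hcard]
      exact Nat.Coprime.coprime_dvd_left (Subgroup.card_dvd_of_le inf_le_left)
        (pPrimeCore_mem p G).2
  -- Step 2
  intro x hx
  rw [Subgroup.mem_subgroupOf] at hx
  show x ∈ (pCore p (↥N ⧸ P)).comap (QuotientGroup.mk' P)
  rw [Subgroup.mem_comap]
  set I : Subgroup (↥N ⧸ P) := ((OpPrimeP p G).subgroupOf N).map (QuotientGroup.mk' P) with hI
  have hIle : I ≤ pCore p (↥N ⧸ P) := by
    apply le_sSup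
    refine Set.mem_setOf_eq ▸ ⟨?_, ?_⟩
    · exact (((OpPrimeP_normal p G).subgroupOf N)).map _ (QuotientGroup.mk'_surjective P)
    · intro g
      obtain ⟨z, hz, hzeq⟩ := g.2
      rw [SetLike.mem_coe, Subgroup.mem_subgroupOf] at hz
      -- (z : G) ∈ OpPrimeP p G, so its image in G ⧸ pPrimeCore p G is in pCore, a p-group
      have hz' : QuotientGroup.mk' (pPrimeCore p G) (z : G) ∈ pCore p (G ⧸ pPrimeCore p G) :=
        Subgroup.mem_comap.mp hz
      obtain ⟨k, hk⟩ := pCore_isPGroup p hp (G ⧸ pPrimeCore p G) ⟨_, hz'⟩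
      have hk' : ((z : G) ^ p ^ k : G) ∈ pPrimeCore p G := by
        have := congrArg (Subgroup.subtype _) hk
        simp only [SubmonoidClass.coe_pow, Subgroup.coe_subtype, OneMemClass.coe_one] at this
        rw [← QuotientGroup.eq_one_iff]
        simpa using this
      have hzN : z ^ p ^ k ∈ (pPrimeCore p G ⊓ N).subgroupOf N := by
        rw [Subgroup.mem_subgroupOf]
        exact ⟨hk', (z ^ p ^ k).2⟩
      have hzP : z ^ p ^ k ∈ P := hT hzN
      refine ⟨k, ?_⟩
      have : g.1 ^ p ^ k = 1 := by
        rw [← hzeq, ← map_pow, QuotientGroup.mk'_apply, QuotientGroup.eq_one_iff]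
        exact hzP
      ext
      simpa using this
  exact hIle (Subgroup.mem_map.mpr ⟨x, Subgroup.mem_subgroupOf.mpr hx, rfl⟩)

lemma card_quot_dvd {G : Type*} [Group G] [Finite G] (p : ℕ) (hp : p.Prime) (N : Subgroup G)
    [N.Normal] : Nat.card (↥N ⧸ OpPrimeP p ↥N) ∣ Nat.card (G ⧸ OpPrimeP p G) := by
  rw [← Subgroup.index_eq_card, ← Subgroup.index_eq_card]
  calc (OpPrimeP p ↥N).index ∣ ((OpPrimeP p G).subgroupOf N).index :=
        Subgroup.index_dvd_of_le (key_lemma p hp N)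
    _ ∣ (OpPrimeP p G).index := Subgroup.relIndex_dvd_index_of_normal _ _

theorem main_aux (π : Set ℕ) (n : ℕ) : ∀ (G : Type u) [Group G] [Finite G],
    Nat.card G ≤ n →
    (∀ p q : ℕ, p.Prime → q.Prime → p ∉ π → q ∈ π → ¬ q ∣ Nat.card (G ⧸ OpPrimeP p G)) →
    ∃ H : Subgroup G, H.Normal ∧ (∀ r : ℕ, r.Prime → r ∣ Nat.card H → r ∈ π) ∧
      (∀ r : ℕ, r.Prime → r ∣ H.index → r ∉ π) := by
  induction n with
  | zero =>
    intro G _ _ hcard _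
    exact absurd (Nat.le_zero.mp hcard) Nat.card_pos.ne'
  | succ n ih =>
    intro G iG fG hcard h
    by_cases hcase : ∀ r : ℕ, r.Prime → r ∣ Nat.card G → r ∈ π
    · refine ⟨⊤, inferInstance, ?_, ?_⟩
      · intro r hr hdvd
        exact hcase r hr (by rwa [Subgroup.card_top] at hdvd)
      · intro r hr hdvd
        rw [Subgroup.index_top] at hdvd
        exact absurd (Nat.dvd_one.mp hdvd) hr.one_lt.ne'
    · push_neg at hcase
      obtain ⟨p, hp, hpdvd, hpπ⟩ := hcase
      set M := pPrimeCore p G with hM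
      haveI hMnorm : M.Normal := pPrimeCore_normal p G
      have hMcop : Nat.Coprime (Nat.card M) p := (pPrimeCore_mem p G).2
      have hMlt : Nat.card ↥M < Nat.card G := by
        refine lt_of_le_of_ne (Nat.le_of_dvd Nat.card_pos (Subgroup.card_subgroup_dvd_card M)) ?_
        intro heq
        have hpM : p ∣ Nat.card ↥M := heq ▸ hpdvd
        exact hp.one_lt.ne' (Nat.Coprime.eq_one_of_dvd hMcop.symm hpM)
      -- index of M is a π'-number
      have hMindex : ∀ s : ℕ, s.Prime → s ∈ π → ¬ s ∣ M.index := by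
        intro s hs hsπ hdvd
        have h1 : M.index = (pCore p (G ⧸ M)).index * Nat.card (pCore p (G ⧸ M)) := by
          rw [Subgroup.index_eq_card, ← Subgroup.index_mul_card (H := pCore p (G ⧸ M))]
        rw [h1] at hdvd
        rcases (Nat.Prime.dvd_mul hs).mp hdvd with h2 | h2
        · have h3 : (OpPrimeP p G).index = (pCore p (G ⧸ M)).index :=
            Subgroup.index_comap_of_surjective _ (QuotientGroup.mk'_surjective M)
          exact h p s hp hs hpπ hsπ (by rw [← Subgroup.index_eq_card, h3]; exact h2)
        · haveI : Fact p.Prime := ⟨hp⟩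
          obtain ⟨k, hk⟩ := IsPGroup.iff_card.mp (pCore_isPGroup p hp (G ⧸ M))
          rw [hk] at h2
          have hsp : s = p := (Nat.prime_dvd_prime_iff_eq hs hp).mp (hs.dvd_of_dvd_pow h2)
          exact hpπ (hsp ▸ hsπ)
      -- apply induction hypothesis to M
      have hMhyp : ∀ r s : ℕ, r.Prime → s.Prime → r ∉ π → s ∈ π →
          ¬ s ∣ Nat.card (↥M ⧸ OpPrimeP r ↥M) := by
        intro r s hr hs hrπ hsπ hdvd
        exact h r s hr hs hrπ hsπ (hdvd.trans (card_quot_dvd r hr M))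
      obtain ⟨H, hHnorm, hHcard, hHindex⟩ :=
        ih ↥M (Nat.lt_succ_iff.mp (lt_of_lt_of_le hMlt hcard)) hMhyp
      haveI := hHnorm
      set H' := H.map M.subtype with hH'
      have hH'card : Nat.card H' = Nat.card H :=
        (Nat.card_congr (Subgroup.equivMapOfInjective H M.subtype M.subtype_injective).toEquiv).symm
      -- π-element criterion
      have hcrit : ∀ y : G, y ∈ M → (∀ r : ℕ, r.Prime → r ∣ orderOf y → r ∈ π) → y ∈ H' := by
        intro y hy hord
        have hyM : (⟨y, hy⟩ : ↥M) ∈ H := by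
          set q : ↥M ⧸ H := QuotientGroup.mk' H ⟨y, hy⟩ with hq
          have h1 : orderOf q ∣ orderOf (⟨y, hy⟩ : ↥M) := orderOf_map_dvd _ _
          have h2 : orderOf q ∣ H.index := by
            rw [Subgroup.index_eq_card]; exact orderOf_dvd_natCard q
          have h3 : orderOf (⟨y, hy⟩ : ↥M) = orderOf y :=
            (orderOf_injective M.subtype M.subtype_injective ⟨y, hy⟩).symm
          have h1' : orderOf q ∣ orderOf y := by rw [← h3]; exact h1
          have h4 : orderOf q = 1 := by
            by_contra hne
            obtain ⟨r, hr, hrdvd⟩ := Nat.exists_prime_and_dvd hne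
            exact hHindex r hr (hrdvd.trans h2) (hord r hr (hrdvd.trans h1'))
          have hq1 : q = 1 := orderOf_eq_one_iff.mp h4
          rwa [hq, QuotientGroup.mk'_apply, QuotientGroup.eq_one_iff] at hq1
        exact ⟨⟨y, hy⟩, hyM, rfl⟩
      have hH'normal : H'.Normal := by
        constructor
        intro x hx g
        have hxM : x ∈ M := Subgroup.map_subtype_le H hx
        have hxord : ∀ r : ℕ, r.Prime → r ∣ orderOf x → r ∈ π := by
          intro r hr hdvd
          refine hHcard r hr ?_
          rw [← hH'card]
          exact hdvd.trans (Subgroup.orderOf_dvd_natCard H' hx)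
        have hgx : g * x * g⁻¹ ∈ M := hMnorm.conj_mem x hxM g
        have hgord : orderOf (g * x * g⁻¹) = orderOf x := by
          have := orderOf_injective (MulAut.conj g).toMonoidHom (MulAut.conj g).injective x
          simpa [MulAut.conj_apply] using this
        exact hcrit _ hgx (fun r hr hd => hxord r hr (hgord ▸ hd))
      have hle : H' ≤ M := Subgroup.map_subtype_le H
      have hidx : H.index * M.index = H'.index := by
        have h5 : H'.relIndex M = H.index := by
          show (H'.subgroupOf M).index = H.index
          congr 1
          show (H.map M.subtype).comap M.subtype = H
          exact Subgroup.comap_map_eq_self_of_injective M.subtype_injective H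
        rw [← Subgroup.relIndex_mul_index hle, h5]
      refine ⟨H', hH'normal, ?_, ?_⟩
      · intro r hr hdvd
        exact hHcard r hr (by rwa [hH'card] at hdvd)
      · intro r hr hdvd hrπ
        rw [← hidx] at hdvd
        rcases (Nat.Prime.dvd_mul hr).mp hdvd with h6 | h6
        · exact hHindex r hr h6 hrπ
        · exact hMindex r hr hrπ h6

/-- If the Hawkes graph of `G` has no edge from a vertex outside `π` to a vertex in `π`
(i.e., for all primes `p ∉ π` and `q ∈ π`, `q` does not divide `|G/O_{p',p}(G)|`),
then `G` has a normal Hall `π`-subgroup. -/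
theorem hawkes_normal_hall {G : Type*} [Group G] [Finite G] (π : Set ℕ)
    (h : ∀ p q : ℕ, p.Prime → q.Prime → p ∉ π → q ∈ π →
      ¬ q ∣ Nat.card (G ⧸ OpPrimeP p G)) :
    ∃ H : Subgroup G, H.Normal ∧
      (∀ r : ℕ, r.Prime → r ∣ Nat.card H → r ∈ π) ∧
      (∀ r : ℕ, r.Prime → r ∣ H.index → r ∉ π) :=
  main_aux π (Nat.card G) G le_rfl h
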